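/- For every continuously differentiable, compactly supported function f : ℝ³ → ℂ and every point y ∈ ℝ³, one has ∫_{ℝ³} |f(x)|/|x−y| dx ≤ ∫_{ℝ³} |∇f(x)| dx. Consequently the Kato norm satisfies ‖f‖_K ≤ ‖∇f‖_{L¹(ℝ³)}, and every function in the homogeneous Sobolev space Ẇ^{1,1}(ℝ³) (the completion of compactly supported test functions under ‖∇f‖_{L¹}) belongs to the Kato-norm closure K₀ of the bounded compactly supported functions. -/

import Mathlib

set_option autoImplicit false

open MeasureTheory ENNReal Filter

noncomputable section

/-- `ℝ³` as a Euclidean space. -/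
abbrev R3 : Type := EuclideanSpace ℝ (Fin 3)

/-- The (global) Kato norm of a function `V` on `ℝ³`:
`‖V‖_K = sup_y ∫ |V(x)| / |x - y| dx`. -/
def katoNorm {E : Type*} [NormedAddCommGroup E] (V : R3 → E) : ℝ≥0∞ :=
  ⨆ y : R3, ∫⁻ x : R3, (‖V x‖₊ : ℝ≥0∞) / (‖x - y‖₊ : ℝ≥0∞)

/-- Membership in `K₀`, the Kato-norm closure of the bounded compactly supported
measurable functions on `ℝ³`. -/
def memK0 (V : R3 → ℂ) : Prop :=
  ∀ ε : ℝ≥0∞, 0 < ε →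
    ∃ W : R3 → ℂ, Measurable W ∧ (∃ C : ℝ, ∀ x, ‖W x‖ ≤ C) ∧ HasCompactSupport W ∧
      katoNorm (fun x => V x - W x) < ε

-- scaling lemma
lemma scal (h : R3 → ℝ≥0∞) (hm : Measurable h) {t : ℝ} (ht : t ≠ 0) :
    ∫⁻ z : R3, h (t • z) = ENNReal.ofReal |(t ^ 3)⁻¹| * ∫⁻ w : R3, h w := by
  rw [← lintegral_map hm (measurable_const_smul t),
    Measure.map_addHaar_smul volume ht, lintegral_smul_measure]
  simp [finrank_euclideanSpace]

lemma pointwise (f : R3 → ℂ) (hf : ContDiff ℝ 1 f) (hsupp : HasCompactSupport f)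
    (y z : R3) (hz : z ≠ 0) :
    (‖f (y + z)‖₊ : ℝ≥0∞) / (‖z‖₊ : ℝ≥0∞) ≤
      ∫⁻ t in Set.Ioi (1:ℝ), (‖fderiv ℝ f (y + t • z)‖₊ : ℝ≥0∞) := by
  obtain ⟨R, hR⟩ := hsupp.isBounded.subset_closedBall 0
  have hznorm : (0:ℝ) < ‖z‖ := norm_pos_iff.2 hz
  set T : ℝ := max 1 ((R + ‖y‖ + 1) / ‖z‖) with hT
  have h1T : (1:ℝ) ≤ T := le_max_left _ _
  have hfT : f (y + T • z) = 0 := by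
    apply image_eq_zero_of_notMem_tsupport
    intro hmem
    have h1 : ‖y + T • z‖ ≤ R := by simpa using hR hmem
    have h2 : (R + ‖y‖ + 1) / ‖z‖ * ‖z‖ ≤ T * ‖z‖ := by
      gcongr; exact le_max_right _ _
    rw [div_mul_cancel₀ _ hznorm.ne'] at h2
    have h3 : ‖T • z‖ ≤ ‖y + T • z‖ + ‖y‖ := by
      simpa using norm_sub_le (y + T • z) y
    rw [norm_smul, Real.norm_eq_abs, abs_of_pos (lt_of_lt_of_le one_pos h1T)] at h3
    linarith
  have hco : Continuous fun t : ℝ => y + t • z :=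
    continuous_const.add (continuous_id.smul continuous_const)
  set g : ℝ → ℂ := fun t => f (y + t • z) with hg
  have hderiv : ∀ t : ℝ, HasDerivAt g ((fderiv ℝ f (y + t • z)) z) t := by
    intro t
    have h1 : HasDerivAt (fun t : ℝ => y + t • z) z t := by
      simpa using ((hasDerivAt_id t).smul_const z).const_add y
    exact ((hf.differentiable one_ne_zero _).hasFDerivAt).comp_hasDerivAt t h1
  have hcont : Continuous fun t : ℝ => (fderiv ℝ f (y + t • z)) z := by
    have h1 : Continuous fun t : ℝ => fderiv ℝ f (y + t • z) :=
      (hf.continuous_fderiv one_ne_zero).comp hco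
    exact h1.clm_apply continuous_const
  have hftc : ∫ t in (1:ℝ)..T, (fderiv ℝ f (y + t • z)) z = g T - g 1 :=
    intervalIntegral.integral_eq_sub_of_hasDerivAt (fun t _ => hderiv t)
      (hcont.intervalIntegrable 1 T)
  have hnorm : ‖f (y + z)‖ ≤ ∫ t in (1:ℝ)..T, ‖(fderiv ℝ f (y + t • z)) z‖ := by
    have : f (y + z) = -(g T - g 1) := by simp [hg, hfT]
    rw [this, ← hftc, norm_neg]
    exact intervalIntegral.norm_integral_le_integral_norm h1T
  -- pass to lintegral
  have hint : IntegrableOn (fun t => ‖(fderiv ℝ f (y + t • z)) z‖) (Set.Ioc 1 T) :=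
    (hcont.norm.integrableOn_Icc).mono_set Set.Ioc_subset_Icc_self
  have key : (‖f (y + z)‖₊ : ℝ≥0∞) ≤
      (∫⁻ t in Set.Ioi (1:ℝ), (‖fderiv ℝ f (y + t • z)‖₊ : ℝ≥0∞)) * ‖z‖₊ := by
    calc (‖f (y + z)‖₊ : ℝ≥0∞) = ENNReal.ofReal ‖f (y + z)‖ := by
          rw [ofReal_norm, enorm_eq_nnnorm]
      _ ≤ ENNReal.ofReal (∫ t in (1:ℝ)..T, ‖(fderiv ℝ f (y + t • z)) z‖) :=
          ENNReal.ofReal_le_ofReal hnorm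
      _ = ENNReal.ofReal (∫ t in Set.Ioc 1 T, ‖(fderiv ℝ f (y + t • z)) z‖) := by
          rw [intervalIntegral.integral_of_le h1T]
      _ = ∫⁻ t in Set.Ioc 1 T, ENNReal.ofReal ‖(fderiv ℝ f (y + t • z)) z‖ :=
          ofReal_integral_eq_lintegral_ofReal hint (ae_of_all _ fun t => norm_nonneg _)
      _ ≤ ∫⁻ t in Set.Ioi (1:ℝ), ENNReal.ofReal ‖(fderiv ℝ f (y + t • z)) z‖ :=
          lintegral_mono_set Set.Ioc_subset_Ioi_self
      _ ≤ ∫⁻ t in Set.Ioi (1:ℝ), (‖fderiv ℝ f (y + t • z)‖₊ : ℝ≥0∞) * ‖z‖₊ := by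
          refine lintegral_mono fun t => ?_
          rw [ofReal_norm, enorm_eq_nnnorm, ← ENNReal.coe_mul]
          exact ENNReal.coe_le_coe.2 (ContinuousLinearMap.le_opNNNorm _ _)
      _ = (∫⁻ t in Set.Ioi (1:ℝ), (‖fderiv ℝ f (y + t • z)‖₊ : ℝ≥0∞)) * ‖z‖₊ :=
          lintegral_mul_const _ (by
            apply Measurable.coe_nnreal_ennreal
            exact ((hf.continuous_fderiv one_ne_zero).comp hco).nnnorm.measurable)
  exact ENNReal.div_le_of_le_mul key

lemma mainlem (f : R3 → ℂ) (hf : ContDiff ℝ 1 f) (hsupp : HasCompactSupport f) (y : R3) :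
    ∫⁻ x : R3, (‖f x‖₊ : ℝ≥0∞) / (‖x - y‖₊ : ℝ≥0∞) ≤
      ∫⁻ x : R3, (‖fderiv ℝ f x‖₊ : ℝ≥0∞) := by
  have hDcont : Continuous fun x : R3 => fderiv ℝ f x := hf.continuous_fderiv one_ne_zero
  have hDmeas : Measurable fun x : R3 => (‖fderiv ℝ f x‖₊ : ℝ≥0∞) :=
    hDcont.nnnorm.measurable.coe_nnreal_ennreal
  set C : ℝ≥0∞ := ∫⁻ x : R3, (‖fderiv ℝ f x‖₊ : ℝ≥0∞) with hC
  have htrans : ∫⁻ x : R3, (‖f x‖₊ : ℝ≥0∞) / (‖x - y‖₊ : ℝ≥0∞) =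
      ∫⁻ z : R3, (‖f (y + z)‖₊ : ℝ≥0∞) / (‖z‖₊ : ℝ≥0∞) := by
    rw [← lintegral_add_left_eq_self
      (fun x : R3 => (‖f x‖₊ : ℝ≥0∞) / (‖x - y‖₊ : ℝ≥0∞)) y]
    simp
  rw [htrans]
  have hae : ∀ᵐ z : R3, z ≠ 0 := by
    rw [ae_iff]
    have : {z : R3 | ¬ z ≠ 0} = {0} := by ext z; simp
    rw [this]
    simp
  calc ∫⁻ z : R3, (‖f (y + z)‖₊ : ℝ≥0∞) / (‖z‖₊ : ℝ≥0∞)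
      ≤ ∫⁻ z : R3, ∫⁻ t in Set.Ioi (1:ℝ), (‖fderiv ℝ f (y + t • z)‖₊ : ℝ≥0∞) := by
        refine lintegral_mono_ae ?_
        filter_upwards [hae] with z hz
        exact pointwise f hf hsupp y z hz
    _ = ∫⁻ t in Set.Ioi (1:ℝ), ∫⁻ z : R3, (‖fderiv ℝ f (y + t • z)‖₊ : ℝ≥0∞) := by
        apply lintegral_lintegral_swap
        apply Measurable.aemeasurable
        apply Measurable.coe_nnreal_ennreal
        apply Continuous.measurable
        exact (hDcont.comp
          (continuous_const.add (continuous_snd.smul continuous_fst))).nnnorm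
    _ = ∫⁻ t in Set.Ioi (1:ℝ), ENNReal.ofReal |(t ^ 3)⁻¹| * C := by
        refine setLIntegral_congr_fun measurableSet_Ioi (fun t ht => ?_)
        have ht0 : t ≠ 0 := by
          have : (1:ℝ) < t := ht
          linarith
        rw [scal (fun w => (‖fderiv ℝ f (y + w)‖₊ : ℝ≥0∞))
          (by exact ((hDcont.comp (continuous_const.add continuous_id)).nnnorm.measurable).coe_nnreal_ennreal) ht0]
        rw [lintegral_add_left_eq_self (fun x : R3 => (‖fderiv ℝ f x‖₊ : ℝ≥0∞)) y]
    _ = C * ∫⁻ t in Set.Ioi (1:ℝ), ENNReal.ofReal |(t ^ 3)⁻¹| := by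
        have hm1 : Measurable fun t : ℝ => ENNReal.ofReal |(t ^ 3)⁻¹| :=
          ((measurable_id.pow_const 3).inv.abs).ennreal_ofReal
        rw [lintegral_mul_const _ hm1, mul_comm]
    _ ≤ C := by
        have hval : ∫⁻ t in Set.Ioi (1:ℝ), ENNReal.ofReal |(t ^ 3)⁻¹| =
            ENNReal.ofReal (1/2) := by
          have hcong : ∫⁻ t in Set.Ioi (1:ℝ), ENNReal.ofReal |(t ^ 3)⁻¹| =
              ∫⁻ t in Set.Ioi (1:ℝ), ENNReal.ofReal (t ^ (-3:ℝ)) := by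
            refine setLIntegral_congr_fun measurableSet_Ioi (fun t ht => ?_)
            have ht1 : (1:ℝ) < t := ht
            have h0 : (0:ℝ) < t := by linarith
            have he : t ^ (-3:ℝ) = (t ^ (3:ℕ))⁻¹ := by
              rw [show (-3:ℝ) = -((3:ℕ):ℝ) by norm_num, Real.rpow_neg h0.le,
                Real.rpow_natCast]
            rw [he, abs_of_nonneg (by positivity)]
          rw [hcong, ← ofReal_integral_eq_lintegral_ofReal
            (integrableOn_Ioi_rpow_of_lt (by norm_num) one_pos)
            ((ae_restrict_iff' measurableSet_Ioi).2 (ae_of_all _ fun t ht =>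
              Real.rpow_nonneg (by linarith [Set.mem_Ioi.1 ht]) _))]
          rw [integral_Ioi_rpow_of_lt (by norm_num) one_pos]
          norm_num
        rw [hval]
        calc C * ENNReal.ofReal (1/2) ≤ C * 1 := by
              gcongr
              exact ENNReal.ofReal_le_one.2 (by norm_num)
          _ = C := mul_one C

theorem kato_le_W11 (f : R3 → ℂ) (hf : ContDiff ℝ 1 f) (hsupp : HasCompactSupport f) :
    (∀ y : R3, ∫ x : R3, ‖f x‖ / ‖x - y‖ ≤ ∫ x : R3, ‖fderiv ℝ f x‖) ∧
    katoNorm f ≤ ENNReal.ofReal (∫ x : R3, ‖fderiv ℝ f x‖) ∧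
    memK0 f ∧
    -- every function in `Ẇ^{1,1}` (a Kato-norm limit of compactly supported test
    -- functions, as provided by the previous two clauses) belongs to `K₀`:
    (∀ (g : R3 → ℂ) (gs : ℕ → R3 → ℂ),
      (∀ n, ContDiff ℝ 1 (gs n)) → (∀ n, HasCompactSupport (gs n)) →
      Tendsto (fun n => katoNorm (fun x => g x - gs n x)) atTop (nhds 0) →
      memK0 g) := by
  have hDcont : Continuous fun x : R3 => fderiv ℝ f x := hf.continuous_fderiv one_ne_zero
  have hDint : Integrable (fun x : R3 => ‖fderiv ℝ f x‖) :=
    hDcont.norm.integrable_of_hasCompactSupport (hsupp.fderiv ℝ).norm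
  have hDeq : ∫⁻ x : R3, (‖fderiv ℝ f x‖₊ : ℝ≥0∞) =
      ENNReal.ofReal (∫ x : R3, ‖fderiv ℝ f x‖) := by
    rw [ofReal_integral_eq_lintegral_ofReal hDint (ae_of_all _ fun x => norm_nonneg _)]
    exact lintegral_congr fun x => (ofReal_norm _).symm
  refine ⟨?_, ?_, ?_, ?_⟩
  · -- clause 1
    intro y
    set G := fun x : R3 => ‖f x‖ / ‖x - y‖ with hG
    have hGnonneg : ∀ x, 0 ≤ G x := fun x => div_nonneg (norm_nonneg _) (norm_nonneg _)
    have hGmeas : Measurable G :=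
      hf.continuous.norm.measurable.div ((continuous_id.sub continuous_const).norm.measurable)
    have haeeq : ∀ᵐ x : R3, ENNReal.ofReal (G x) = (‖f x‖₊ : ℝ≥0∞) / (‖x - y‖₊ : ℝ≥0∞) := by
      have hy : ∀ᵐ x : R3, x ≠ y := by
        rw [ae_iff]
        have h : {x : R3 | ¬ x ≠ y} = {y} := by ext x; simp
        rw [h]; simp
      filter_upwards [hy] with x hx
      have h0 : 0 < ‖x - y‖ := by rwa [norm_pos_iff, sub_ne_zero]
      rw [hG, ENNReal.ofReal_div_of_pos h0, ofReal_norm, ofReal_norm,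
        enorm_eq_nnnorm, enorm_eq_nnnorm]
    have hle : ∫⁻ x : R3, ENNReal.ofReal (G x) ≤
        ENNReal.ofReal (∫ x : R3, ‖fderiv ℝ f x‖) :=
      (lintegral_congr_ae haeeq).le.trans ((mainlem f hf hsupp y).trans hDeq.le)
    have hGint : Integrable G := by
      refine ⟨hGmeas.aestronglyMeasurable, ?_⟩
      have heq : ∀ x, (‖G x‖₊ : ℝ≥0∞) = ENNReal.ofReal (G x) := fun x =>
        Real.enorm_eq_ofReal (hGnonneg x)
      rw [hasFiniteIntegral_iff_ofReal (ae_of_all _ hGnonneg)]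
      calc ∫⁻ x, ENNReal.ofReal (G x) ≤ ENNReal.ofReal (∫ x : R3, ‖fderiv ℝ f x‖) := hle
        _ < ⊤ := ofReal_lt_top
    have h1 : ∫ x : R3, G x = (∫⁻ x : R3, ENNReal.ofReal (G x)).toReal :=
      integral_eq_lintegral_of_nonneg_ae (ae_of_all _ hGnonneg) hGmeas.aestronglyMeasurable
    have h2 : ∫ x : R3, ‖fderiv ℝ f x‖ =
        (ENNReal.ofReal (∫ x : R3, ‖fderiv ℝ f x‖)).toReal :=
      (toReal_ofReal (integral_nonneg fun x => norm_nonneg _)).symm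
    calc ∫ x : R3, ‖f x‖ / ‖x - y‖ = (∫⁻ x : R3, ENNReal.ofReal (G x)).toReal := h1
      _ ≤ (ENNReal.ofReal (∫ x : R3, ‖fderiv ℝ f x‖)).toReal :=
          ENNReal.toReal_mono ofReal_ne_top hle
      _ = ∫ x : R3, ‖fderiv ℝ f x‖ := h2.symm
  · -- clause 2
    exact iSup_le fun y => (mainlem f hf hsupp y).trans hDeq.le
  · -- clause 3
    intro ε hε
    refine ⟨f, hf.continuous.measurable,
      hf.continuous.bounded_above_of_compact_support hsupp, hsupp, ?_⟩
    have : katoNorm (fun x => f x - f x) = 0 := by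
      simp [katoNorm, ENNReal.zero_div]
    rw [this]; exact hε
  · -- clause 4
    intro g gs hc hs htend ε hε
    obtain ⟨n, hn⟩ := (htend.eventually (gt_mem_nhds hε)).exists
    exact ⟨gs n, (hc n).continuous.measurable,
      (hc n).continuous.bounded_above_of_compact_support (hs n), hs n, hn⟩
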